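/- Let k ≥ 2 be an integer and x a real number with 0 < x ≤ k/2. Then the Bessel function of the first kind satisfies |J_k(x)| ≤ e^{-k/5}. -/

import Mathlib

/-- The Bessel function of the first kind of integer order `k`, via its power series
`J_k(x) = ∑_{m≥0} (−1)^m (x/2)^{2m+k}/(m! (m+k)!)`. -/
noncomputable def besselJ (k : ℕ) (x : ℝ) : ℝ :=
  ∑' m : ℕ, (-1 : ℝ) ^ m * (x / 2) ^ (2 * m + k) / (m.factorial * (m + k).factorial)

lemma exp_13_10_le_4 : Real.exp (13 / 10) ≤ 4 := by
  have h1 : Real.exp 1 ≤ 2.7182818286 := Real.exp_one_lt_d9.le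
  have h10 : (Real.exp (13 / 10)) ^ 10 = (Real.exp 1) ^ 13 := by
    rw [← Real.exp_nat_mul, ← Real.exp_nat_mul]; norm_num
  have h2 : (Real.exp (13 / 10)) ^ 10 ≤ 4 ^ 10 := by
    rw [h10]
    calc (Real.exp 1) ^ 13 ≤ 2.7182818286 ^ 13 := by
          exact pow_le_pow_left₀ (Real.exp_pos 1).le h1 13
      _ ≤ 4 ^ 10 := by norm_num
  exact le_of_pow_le_pow_left₀ (by norm_num) (by norm_num) h2

lemma pow_div_factorial_le_exp (k : ℕ) : (k : ℝ) ^ k / k.factorial ≤ Real.exp k := by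
  have h := Real.sum_le_exp_of_nonneg (x := (k : ℝ)) (Nat.cast_nonneg k) (k + 1)
  refine le_trans ?_ h
  have := Finset.single_le_sum (f := fun i => (k : ℝ) ^ i / i.factorial)
    (fun i _ => by positivity) (Finset.self_mem_range_succ k)
  simpa using this

/-- For `k ≥ 2` and `0 < x ≤ k/2`, `|J_k(x)| ≤ e^{-k/5}`. -/
theorem stmt9 (k : ℕ) (hk : 2 ≤ k) (x : ℝ) (hx : 0 < x) (hxk : x ≤ (k : ℝ) / 2) :
    |besselJ k x| ≤ Real.exp (-(k : ℝ) / 5) := by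
  have hk0 : (0 : ℝ) < k := by positivity
  set y : ℝ := x / 2 with hy
  have hy0 : 0 < y := by positivity
  have hyk : y ≤ (k : ℝ) / 4 := by rw [hy]; linarith
  set r : ℝ := y ^ 2 / k with hr
  have hr0 : 0 ≤ r := by positivity
  set c : ℝ := y ^ k / k.factorial with hc
  have hc0 : 0 ≤ c := by positivity
  set t : ℕ → ℝ := fun m =>
    (-1 : ℝ) ^ m * y ^ (2 * m + k) / (m.factorial * (m + k).factorial) with ht
  -- key termwise bound
  have hbound : ∀ m, |t m| ≤ c * (r ^ m / m.factorial) := by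
    intro m
    have hfac : (k.factorial : ℝ) * (k : ℝ) ^ m ≤ ((m + k).factorial : ℝ) := by
      have : k.factorial * k ^ m ≤ (m + k).factorial := by
        calc k.factorial * k ^ m ≤ k.factorial * (k + 1) ^ m :=
              Nat.mul_le_mul_left _ (Nat.pow_le_pow_left (Nat.le_succ k) m)
          _ ≤ (k + m).factorial := Nat.factorial_mul_pow_le_factorial
          _ = (m + k).factorial := by rw [Nat.add_comm]
      exact_mod_cast this
    have habs : |t m| = y ^ (2 * m + k) / (m.factorial * (m + k).factorial) := by
      rw [ht]
      rw [abs_div, abs_mul, abs_pow, abs_neg, abs_one, one_pow, one_mul, abs_pow,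
        abs_of_pos hy0]
      congr 1
      rw [abs_of_pos]
      positivity
    rw [habs]
    have heq : c * (r ^ m / m.factorial) =
        y ^ (2 * m + k) / (m.factorial * (k.factorial * (k : ℝ) ^ m)) := by
      rw [hc, hr, div_pow, pow_add, pow_mul]
      have hkf : (k.factorial : ℝ) ≠ 0 := by positivity
      have hmf : (m.factorial : ℝ) ≠ 0 := by positivity
      field_simp
      rw [hy]
      ring_nf
      rw [mul_assoc _ ((1 / 2 : ℝ) ^ k) ((2 : ℝ) ^ k), ← mul_pow]
      norm_num
      exact mul_inv_cancel_right₀ (pow_ne_zero _ hk0.ne') _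
    rw [heq]
    gcongr
  have hsummable_bound : Summable fun m => c * (r ^ m / m.factorial) :=
    (Real.summable_pow_div_factorial r).mul_left c
  have hsummable_abs : Summable fun m => |t m| :=
    Summable.of_nonneg_of_le (fun m => abs_nonneg _) hbound hsummable_bound
  have hsummable : Summable t := hsummable_abs.of_abs
  have hb : besselJ k x = ∑' m, t m := rfl
  have h1 : |besselJ k x| ≤ ∑' m, |t m| := by
    rw [hb, ← Real.norm_eq_abs]
    have := norm_tsum_le_tsum_norm (f := t)
      (by simpa only [Real.norm_eq_abs] using hsummable_abs)
    simpa only [Real.norm_eq_abs] using this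
  have h2 : ∑' m, |t m| ≤ ∑' m, c * (r ^ m / m.factorial) :=
    Summable.tsum_le_tsum hbound hsummable_abs hsummable_bound
  have h3 : ∑' m, c * (r ^ m / m.factorial) = c * Real.exp r := by
    rw [tsum_mul_left]
    congr 1
    rw [Real.exp_eq_exp_ℝ, NormedSpace.exp_eq_tsum_div]
  -- now bound c * exp r
  have hrk : r ≤ (k : ℝ) / 16 := by
    rw [hr, div_le_div_iff₀ hk0 (by norm_num)]
    nlinarith [sq_nonneg y, sq_nonneg ((k : ℝ) / 4 - y)]
  have h4 : c * Real.exp r ≤ ((k : ℝ) / 4) ^ k / k.factorial * Real.exp ((k : ℝ) / 16) := by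
    have : c ≤ ((k : ℝ) / 4) ^ k / k.factorial := by
      rw [hc]; gcongr
    exact mul_le_mul this (Real.exp_le_exp.mpr hrk) (Real.exp_pos r).le (by positivity)
  have h5 : ((k : ℝ) / 4) ^ k / k.factorial * Real.exp ((k : ℝ) / 16)
      ≤ Real.exp (-(k : ℝ) / 5) := by
    have hkk := pow_div_factorial_le_exp k
    have hstep : ((k : ℝ) / 4) ^ k / k.factorial ≤ Real.exp k / 4 ^ k := by
      rw [div_pow, div_div, div_le_div_iff₀ (by positivity) (by positivity)]
      calc (k : ℝ) ^ k * 4 ^ k ≤ Real.exp k * k.factorial * 4 ^ k := by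
            have := (div_le_iff₀ (by positivity : (0:ℝ) < k.factorial)).mp hkk
            nlinarith [pow_pos (by norm_num : (0:ℝ) < 4) k]
        _ = Real.exp k * (4 ^ k * k.factorial) := by ring
    calc ((k : ℝ) / 4) ^ k / k.factorial * Real.exp ((k : ℝ) / 16)
        ≤ Real.exp k / 4 ^ k * Real.exp ((k : ℝ) / 16) := by
          exact mul_le_mul_of_nonneg_right hstep (Real.exp_pos _).le
      _ = Real.exp ((17 : ℝ) / 16 * k) / 4 ^ k := by
          rw [div_mul_eq_mul_div, ← Real.exp_add]; ring_nf
      _ ≤ Real.exp (-(k : ℝ) / 5) := by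
          rw [div_le_iff₀ (by positivity : (0:ℝ) < 4 ^ k)]
          have hkey : Real.exp ((17 : ℝ) / 16 * k + (k : ℝ) / 5) ≤ 4 ^ k := by
            have he : Real.exp ((17 : ℝ) / 16 * k + (k : ℝ) / 5)
                = Real.exp ((101 : ℝ) / 80) ^ k := by
              rw [← Real.exp_nat_mul]; ring_nf
            rw [he]
            apply pow_le_pow_left₀ (Real.exp_pos _).le
            calc Real.exp ((101 : ℝ) / 80) ≤ Real.exp (13 / 10) := by
                  apply Real.exp_le_exp.mpr; norm_num
              _ ≤ 4 := exp_13_10_le_4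
          calc Real.exp ((17 : ℝ) / 16 * k)
              = Real.exp ((17 : ℝ) / 16 * k + (k : ℝ) / 5) * Real.exp (-(k : ℝ) / 5) := by
                rw [← Real.exp_add]; ring_nf
            _ ≤ 4 ^ k * Real.exp (-(k : ℝ) / 5) :=
                mul_le_mul_of_nonneg_right hkey (Real.exp_pos _).le
            _ = Real.exp (-(k : ℝ) / 5) * 4 ^ k := mul_comm _ _
  calc |besselJ k x| ≤ ∑' m, |t m| := h1
    _ ≤ ∑' m, c * (r ^ m / m.factorial) := h2
    _ = c * Real.exp r := h3
    _ ≤ ((k : ℝ) / 4) ^ k / k.factorial * Real.exp ((k : ℝ) / 16) := h4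
    _ ≤ Real.exp (-(k : ℝ) / 5) := h5
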